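/- Let A ∈ ℝ^{r×m}, F ∈ ℝ^{m×k}, and let t be a natural number. Then Σ_{j>t} σ_j(A·F)² ≤ ‖A‖_F² · Σ_{j>t} σ_j(F)², i.e., the sum of the squares of the singular values of A·F after the t largest is at most ‖A‖_F² times the sum of the squares of the singular values of F after the t largest. -/

import Mathlib

/-- Frobenius norm of a real matrix: the square root of the sum of the squares of its entries. -/
noncomputable def frob {r k : ℕ} (M : Matrix (Fin r) (Fin k) ℝ) : ℝ :=
  Real.sqrt (∑ i, ∑ j, (M i j) ^ 2)

/-- The squared singular values of a real matrix `M`, in decreasing order: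
`svSq M j` is the `j`-th largest (0-indexed) eigenvalue of `MᵀM`,
i.e. the square of the `j`-th largest singular value of `M`. -/
noncomputable def svSq {r k : ℕ} (M : Matrix (Fin r) (Fin k) ℝ) : Fin k → ℝ :=
  fun j =>
    ((show (Matrix.transpose M * M).IsHermitian by simpa using Matrix.isHermitian_conjTranspose_mul_self M).eigenvalues ∘
      Tuple.sort (show (Matrix.transpose M * M).IsHermitian by simpa using Matrix.isHermitian_conjTranspose_mul_self M).eigenvalues) j.rev

/-- `Σ_{j>t} σ_j(M)²`: the sum of the squares of all singular values of `M`
after the `t` largest. -/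
noncomputable def svTailSq {r k : ℕ} (M : Matrix (Fin r) (Fin k) ℝ) (t : ℕ) : ℝ :=
  ∑ j ∈ Finset.univ.filter (fun j : Fin k => t ≤ (j : ℕ)), svSq M j

lemma Matrix.isHermitian_transpose_mul_self {r k : ℕ} (M : Matrix (Fin r) (Fin k) ℝ) :
    (Matrix.transpose M * M).IsHermitian := by
  simpa using Matrix.isHermitian_conjTranspose_mul_self M

section Aux
open Finset Matrix

lemma card_filter_val_lt (k s : ℕ) :
    ((Finset.univ : Finset (Fin k)).filter (fun p : Fin k => (p : ℕ) < s)).card = min s k := by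
  have h : ((Finset.univ : Finset (Fin k)).filter (fun p : Fin k => (p : ℕ) < s))
      = (Finset.univ : Finset (Fin (min s k))).map (Fin.castLEEmb (min_le_right s k)) := by
    ext p
    simp only [Finset.mem_filter, Finset.mem_univ, true_and, Finset.mem_map,
      Fin.castLEEmb_apply]
    constructor
    · intro hp
      refine ⟨⟨(p : ℕ), by omega⟩, ?_⟩
      ext; simp
    · rintro ⟨q, rfl⟩
      have := q.isLt; simp; omega
  rw [h, Finset.card_map, Finset.card_univ, Fintype.card_fin]

lemma weighted_sum_lower {k : ℕ} (lam c : Fin k → ℝ) (s : ℕ) (hmono : Monotone lam)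
    (hc0 : ∀ i, 0 ≤ c i) (hc1 : ∀ i, c i ≤ 1) (hcs : ∑ i, c i = s) (hs : s ≤ k) :
    ∑ p ∈ Finset.univ.filter (fun p : Fin k => (p : ℕ) < s), lam p ≤ ∑ i, lam i * c i := by
  rcases Nat.eq_zero_or_pos s with hs0 | hspos
  · subst hs0
    have hzero : ∀ i ∈ (Finset.univ : Finset (Fin k)), c i = 0 :=
      (Finset.sum_eq_zero_iff_of_nonneg (fun i _ => hc0 i)).1 (by simpa using hcs)
    have hr : ∑ i, lam i * c i = 0 :=
      Finset.sum_eq_zero fun i hi => by rw [hzero i hi, mul_zero]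
    have hl : ∑ p ∈ Finset.univ.filter (fun p : Fin k => (p : ℕ) < 0), lam p = 0 :=
      Finset.sum_eq_zero fun p hp => by simp at hp
    simp only [Nat.cast_zero] at *
    rw [hr, hl]
  · set τ := lam ⟨s - 1, by omega⟩ with hτ
    have key : ∀ i : Fin k,
        (if (i : ℕ) < s then lam i else 0) + τ * (c i - if (i : ℕ) < s then 1 else 0)
          ≤ lam i * c i := by
      intro i
      by_cases h : (i : ℕ) < s
      · simp only [h, if_pos]
        have h1 : lam i ≤ τ := hmono (by simp [Fin.le_def]; omega)
        nlinarith [hc1 i]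
      · simp only [h, if_neg, not_false_iff]
        have h1 : τ ≤ lam i := hmono (by simp [Fin.le_def]; omega)
        nlinarith [hc0 i]
    have hsum := Finset.sum_le_sum (fun i (_ : i ∈ Finset.univ) => key i)
    have e1 : ∑ i : Fin k, (if (i : ℕ) < s then lam i else 0)
        = ∑ p ∈ Finset.univ.filter (fun p : Fin k => (p : ℕ) < s), lam p :=
      (Finset.sum_filter _ _).symm
    have e2 : ∑ i : Fin k, (if (i : ℕ) < s then (1 : ℝ) else 0) = (s : ℝ) := by
      rw [← Finset.sum_filter, Finset.sum_const, card_filter_val_lt, min_eq_left hs]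
      simp
    rw [Finset.sum_add_distrib, ← Finset.mul_sum, Finset.sum_sub_distrib, e1, e2, hcs] at hsum
    linarith

lemma tail_le_diag_sum {k : ℕ} {H : Matrix (Fin k) (Fin k) ℝ} (hH : H.IsHermitian)
    (U : Matrix (Fin k) (Fin k) ℝ) (hU1 : star U * U = 1) (hU2 : U * star U = 1)
    (S : Finset (Fin k)) :
    ∑ p ∈ Finset.univ.filter (fun p : Fin k => (p : ℕ) < S.card),
        (hH.eigenvalues ∘ Tuple.sort hH.eigenvalues) p
      ≤ ∑ j ∈ S, (star U * H * U) j j := by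
  set V : Matrix (Fin k) (Fin k) ℝ := (hH.eigenvectorUnitary : Matrix (Fin k) (Fin k) ℝ) with hVdef
  have hVmem := hH.eigenvectorUnitary.2
  rw [Unitary.mem_iff] at hVmem
  obtain ⟨hV1, hV2⟩ := hVmem
  set W : Matrix (Fin k) (Fin k) ℝ := star V * U with hWdef
  have hW1 : star W * W = 1 := by
    rw [hWdef, Matrix.star_mul, star_star, mul_assoc, ← mul_assoc V, hV2, one_mul, hU1]
  have hW2 : W * star W = 1 := by
    rw [hWdef, Matrix.star_mul, star_star, mul_assoc, ← mul_assoc U, hU2, one_mul, hV1]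
  have hHU : star U * H * U = star W * Matrix.diagonal hH.eigenvalues * W := by
    conv_lhs => rw [hH.spectral_theorem, Unitary.conjStarAlgAut_apply]
    rw [RCLike.ofReal_real_eq_id, Function.id_comp]
    rw [hWdef, Matrix.star_mul, star_star]
    simp only [Matrix.mul_assoc, hVdef]
  have hentry : ∀ j, (star W * Matrix.diagonal hH.eigenvalues * W) j j
      = ∑ i, hH.eigenvalues i * (W i j) ^ 2 := by
    intro j
    rw [Matrix.mul_assoc, Matrix.mul_apply]
    refine Finset.sum_congr rfl fun i _ => ?_
    rw [Matrix.diagonal_mul, Matrix.star_apply]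
    simp [sq]; ring
  have hrow : ∀ i, ∑ j, (W i j) ^ 2 = 1 := by
    intro i
    have h := congrFun (congrFun hW2 i) i
    rw [Matrix.mul_apply] at h
    simpa [Matrix.star_apply, sq, Matrix.one_apply] using h
  have hcol : ∀ j, ∑ i, (W i j) ^ 2 = 1 := by
    intro j
    have h := congrFun (congrFun hW1 j) j
    rw [Matrix.mul_apply] at h
    simpa [Matrix.star_apply, sq, Matrix.one_apply] using h
  set c : Fin k → ℝ := fun i => ∑ j ∈ S, (W i j) ^ 2 with hcdef
  have swap : ∑ j ∈ S, (star U * H * U) j j = ∑ i, hH.eigenvalues i * c i := by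
    simp_rw [hHU, hentry]
    rw [Finset.sum_comm]
    simp_rw [hcdef, Finset.mul_sum]
  rw [swap]
  set ρ := Tuple.sort hH.eigenvalues with hρ
  have hperm : ∑ i, hH.eigenvalues i * c i
      = ∑ p, (hH.eigenvalues ∘ ρ) p * (c ∘ ρ) p :=
    (Equiv.sum_comp ρ (fun i => hH.eigenvalues i * c i)).symm
  rw [hperm]
  refine weighted_sum_lower _ _ _ (Tuple.monotone_sort _) ?_ ?_ ?_ ?_
  · intro i; exact Finset.sum_nonneg fun j _ => sq_nonneg _
  · intro i
    calc (c ∘ ρ) i = ∑ j ∈ S, (W (ρ i) j) ^ 2 := rfl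
      _ ≤ ∑ j, (W (ρ i) j) ^ 2 :=
          Finset.sum_le_sum_of_subset_of_nonneg (Finset.subset_univ S)
            (fun j _ _ => sq_nonneg _)
      _ = 1 := hrow _
  · simp only [Function.comp_apply]
    rw [Equiv.sum_comp ρ c]
    rw [show ∑ i, c i = ∑ j ∈ S, ∑ i, (W i j) ^ 2 from Finset.sum_comm]
    simp [hcol]
  · calc S.card ≤ (Finset.univ : Finset (Fin k)).card := Finset.card_le_univ S
      _ = k := by simp

lemma svTailSq_eq {r k : ℕ} (M : Matrix (Fin r) (Fin k) ℝ) (t : ℕ) :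
    svTailSq M t = ∑ p ∈ Finset.univ.filter (fun p : Fin k => (p : ℕ) + t < k),
      ((Matrix.isHermitian_transpose_mul_self M).eigenvalues ∘
        Tuple.sort (Matrix.isHermitian_transpose_mul_self M).eigenvalues) p := by
  unfold svTailSq svSq
  refine Finset.sum_equiv Fin.revPerm ?_ ?_
  · intro j
    simp only [Finset.mem_filter, Finset.mem_univ, true_and, Fin.revPerm_apply, Fin.val_rev]
    have := j.isLt
    omega
  · intro j _
    simp

end Aux

open Finset Matrix in
theorem singular_tail_of_product
    (r m k : ℕ) (A : Matrix (Fin r) (Fin m) ℝ) (F : Matrix (Fin m) (Fin k) ℝ) (t : ℕ) :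
    svTailSq (A * F) t ≤ frob A ^ 2 * svTailSq F t := by
  classical
  have hG := Matrix.isHermitian_transpose_mul_self F
  have hH := Matrix.isHermitian_transpose_mul_self (A * F)
  set U : Matrix (Fin k) (Fin k) ℝ := (hG.eigenvectorUnitary : Matrix (Fin k) (Fin k) ℝ)
    with hUdef
  have hUmem := hG.eigenvectorUnitary.2
  rw [Unitary.mem_iff] at hUmem
  obtain ⟨hU1, hU2⟩ := hUmem
  rw [← hUdef] at hU1 hU2
  set ρ := Tuple.sort hG.eigenvalues with hρ
  set T := Finset.univ.filter (fun p : Fin k => (p : ℕ) + t < k) with hT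
  set S := T.image ρ with hS
  have hScard : S.card = T.card := Finset.card_image_of_injective _ ρ.injective
  have hTcard : T.card = k - t := by
    have h : T = Finset.univ.filter (fun p : Fin k => (p : ℕ) < k - t) := by
      ext p
      simp only [hT, Finset.mem_filter, Finset.mem_univ, true_and]
      omega
    rw [h, card_filter_val_lt]
    omega
  have hTS : T = Finset.univ.filter (fun p : Fin k => (p : ℕ) < S.card) := by
    ext p
    rw [hScard, hTcard]
    simp only [hT, Finset.mem_filter, Finset.mem_univ, true_and, hScard, hTcard]
    omega
  -- Step A
  have stepA : svTailSq (A * F) t ≤ ∑ j ∈ S, (star U * ((A * F)ᴴ * (A * F)) * U) j j := by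
    rw [svTailSq_eq, ← hT, hTS]
    exact tail_le_diag_sum hH U hU1 hU2 S
  -- diagonalization of G
  have hdiag : star U * (Fᴴ * F) * U = Matrix.diagonal hG.eigenvalues := by
    have h := hG.conjStarAlgAut_star_eigenvectorUnitary
    rw [Unitary.conjStarAlgAut_apply, Unitary.coe_star, star_star] at h
    rwa [RCLike.ofReal_real_eq_id, Function.id_comp, ← hUdef] at h
  -- Step C
  have stepC : ∑ j ∈ S, (star U * (Fᴴ * F) * U) j j = svTailSq F t := by
    rw [hdiag, svTailSq_eq, ← hT, hS,
      Finset.sum_image (fun a _ b _ h => ρ.injective h)]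
    refine Finset.sum_congr rfl fun p _ => ?_
    simp [Matrix.diagonal_apply_eq]
    rfl
  -- entries as column norms
  have key : ∀ (r' : ℕ) (B : Matrix (Fin r') (Fin k) ℝ) (j : Fin k),
      (star U * (Bᴴ * B) * U) j j = ∑ i, ((B * U) i j) ^ 2 := by
    intro r' B j
    have h : star U * (Bᴴ * B) * U = (B * U)ᴴ * (B * U) := by
      rw [Matrix.star_eq_conjTranspose, Matrix.conjTranspose_mul]
      simp only [Matrix.mul_assoc]
    rw [h, Matrix.mul_apply]
    refine Finset.sum_congr rfl fun i _ => ?_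
    simp [Matrix.conjTranspose_apply, sq]
  -- Step B
  have stepB : ∀ j : Fin k, (star U * ((A * F)ᴴ * (A * F)) * U) j j
      ≤ (∑ p, ∑ q, (A p q) ^ 2) * (star U * (Fᴴ * F) * U) j j := by
    intro j
    rw [key r (A * F) j, key m F j]
    have hassoc : A * F * U = A * (F * U) := Matrix.mul_assoc A F U
    rw [hassoc]
    have h1 : ∀ i : Fin r, ((A * (F * U)) i j) ^ 2
        ≤ (∑ q, (A i q) ^ 2) * ∑ l, ((F * U) l j) ^ 2 := by
      intro i
      rw [Matrix.mul_apply]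
      exact Finset.sum_mul_sq_le_sq_mul_sq _ _ _
    calc ∑ i, ((A * (F * U)) i j) ^ 2
        ≤ ∑ i, (∑ q, (A i q) ^ 2) * ∑ l, ((F * U) l j) ^ 2 :=
          Finset.sum_le_sum fun i _ => h1 i
      _ = (∑ p, ∑ q, (A p q) ^ 2) * ∑ l, ((F * U) l j) ^ 2 := by rw [← Finset.sum_mul]
  have hfrob : frob A ^ 2 = ∑ p, ∑ q, (A p q) ^ 2 :=
    Real.sq_sqrt (Finset.sum_nonneg fun p _ => Finset.sum_nonneg fun q _ => sq_nonneg _)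
  calc svTailSq (A * F) t
      ≤ ∑ j ∈ S, (star U * ((A * F)ᴴ * (A * F)) * U) j j := stepA
    _ ≤ ∑ j ∈ S, (∑ p, ∑ q, (A p q) ^ 2) * (star U * (Fᴴ * F) * U) j j :=
        Finset.sum_le_sum fun j _ => stepB j
    _ = (∑ p, ∑ q, (A p q) ^ 2) * ∑ j ∈ S, (star U * (Fᴴ * F) * U) j j := by
        rw [Finset.mul_sum]
    _ = frob A ^ 2 * svTailSq F t := by rw [stepC, hfrob]
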